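/- Let g : (0,∞) → ℝ be an asymptotically linear continuous function, i.e. there exists μ(g) ∈ ℝ such that φ_g(t) := g(t) − μ(g)t extends to a continuous function on [0,∞]. Then the convex envelope ğ of g (the largest convex function on (0,∞) bounded above by g) is also asymptotically linear, with μ(ğ) = μ(g) and ğ(0) = g(0), where g(0) and ğ(0) denote the limits at 0. -/

import Mathlib

open Set Filter

/-- The convex envelope of `g : (0,∞) → ℝ`: the pointwise supremum of all affine functions
bounded above by `g` on `(0,∞)` (which is the largest convex function bounded above by `g`). -/
noncomputable def convexEnvelope (g : ℝ → ℝ) (t : ℝ) : ℝ :=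
  sSup {y : ℝ | ∃ a b : ℝ, (∀ s ∈ Set.Ioi (0 : ℝ), a * s + b ≤ g s) ∧ y = a * t + b}

/-- Let `g : (0,∞) → ℝ` be an asymptotically linear continuous function:
there are `μ, c0, cinf ∈ ℝ` with `g t − μ t → c0` as `t ↓ 0` and `g t − μ t → cinf` as
`t → ∞`. Then the convex envelope `ğ` of `g` is also asymptotically linear continuous with
the same asymptotic slope `μ(ğ) = μ(g) = μ` (i.e. `ğ t − μ t` is continuous on `(0,∞)` and
has finite limits at `0` and at `∞`), and `ğ(0) = g(0)`, i.e. the limit of `ğ` at `0` equals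
`c0`. -/
theorem convexEnvelope_asymptoticallyLinear
    (g : ℝ → ℝ) (hg : ContinuousOn g (Set.Ioi 0))
    (μ c0 cinf : ℝ)
    (h0 : Filter.Tendsto (fun t => g t - μ * t) (nhdsWithin 0 (Set.Ioi 0)) (nhds c0))
    (hinf : Filter.Tendsto (fun t => g t - μ * t) Filter.atTop (nhds cinf)) :
    ContinuousOn (convexEnvelope g) (Set.Ioi 0) ∧
      (∃ L : ℝ, Filter.Tendsto (fun t => convexEnvelope g t - μ * t) Filter.atTop (nhds L)) ∧
      Filter.Tendsto (fun t => convexEnvelope g t - μ * t)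
        (nhdsWithin 0 (Set.Ioi 0)) (nhds c0) := by
  set φ : ℝ → ℝ := fun t => g t - μ * t with hφdef
  have hφc : ContinuousOn φ (Ioi 0) :=
    hg.sub ((continuous_const.mul continuous_id).continuousOn)
  -- bound on φ
  obtain ⟨B, hB⟩ : ∃ B : ℝ, ∀ s ∈ Ioi (0:ℝ), |φ s| ≤ B := by
    obtain ⟨δ, hδpos, hδ⟩ := Metric.tendsto_nhdsWithin_nhds.1 h0 1 one_pos
    obtain ⟨T, hT⟩ := (Metric.tendsto_atTop.1 hinf) 1 one_pos
    set T' : ℝ := max T δ with hT'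
    obtain ⟨C, hC⟩ := (isCompact_Icc (a := δ) (b := T')).exists_bound_of_continuousOn
      (hφc.mono (fun x hx => lt_of_lt_of_le hδpos hx.1))
    refine ⟨max (max (|c0| + 1) (|cinf| + 1)) C, fun s hs => ?_⟩
    rcases lt_or_ge s δ with h1 | h1
    · have := hδ (x := s) hs (by simp [Real.dist_eq, abs_of_pos (mem_Ioi.1 hs)]; linarith)
      rw [Real.dist_eq] at this
      have : |φ s| ≤ |c0| + 1 := by
        calc |φ s| ≤ |φ s - c0| + |c0| := by simpa using abs_add_le (φ s - c0) c0
        _ ≤ |c0| + 1 := by linarith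
      exact le_trans this (le_trans (le_max_left _ _) (le_max_left _ _))
    · rcases le_or_gt s T' with h2 | h2
      · exact le_trans (hC s ⟨h1, h2⟩) (le_max_right _ _)
      · have := hT s (le_trans (le_max_left T δ) h2.le)
        rw [Real.dist_eq] at this
        have : |φ s| ≤ |cinf| + 1 := by
          calc |φ s| ≤ |φ s - cinf| + |cinf| := by simpa using abs_add_le (φ s - cinf) cinf
          _ ≤ |cinf| + 1 := by linarith
        exact le_trans this (le_trans (le_max_right _ _) (le_max_left _ _))
  have hBl : ∀ s ∈ Ioi (0:ℝ), -B ≤ φ s := fun s hs => (abs_le.1 (hB s hs)).1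
  have hBu : ∀ s ∈ Ioi (0:ℝ), φ s ≤ B := fun s hs => (abs_le.1 (hB s hs)).2
  set S : ℝ → Set ℝ :=
    fun t => {y : ℝ | ∃ a b : ℝ, (∀ s ∈ Set.Ioi (0 : ℝ), a * s + b ≤ g s) ∧ y = a * t + b}
    with hSdef
  have hmem : ∀ t, (μ * t + (-B)) ∈ S t := by
    intro t
    exact ⟨μ, -B, fun s hs => by have := hBl s hs; simp only [hφdef] at this; linarith, rfl⟩
  have hne : ∀ t, (S t).Nonempty := fun t => ⟨_, hmem t⟩
  have hub : ∀ t ∈ Ioi (0:ℝ), ∀ y ∈ S t, y ≤ g t := by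
    rintro t ht y ⟨a, b, hab, rfl⟩; exact hab t ht
  have hbddA : ∀ t ∈ Ioi (0:ℝ), BddAbove (S t) := fun t ht => ⟨g t, fun y hy => hub t ht y hy⟩
  have hE_le : ∀ t ∈ Ioi (0:ℝ), convexEnvelope g t ≤ g t :=
    fun t ht => csSup_le (hne t) (hub t ht)
  have hE_ge : ∀ t ∈ Ioi (0:ℝ), μ * t + (-B) ≤ convexEnvelope g t :=
    fun t ht => le_csSup (hbddA t ht) (hmem t)
  set h : ℝ → ℝ := fun t => convexEnvelope g t - μ * t with hhdef
  have hh_le : ∀ t ∈ Ioi (0:ℝ), h t ≤ B := by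
    intro t ht
    have := hE_le t ht; have := hBu t ht
    simp only [hhdef, hφdef] at *; linarith
  have hh_ge : ∀ t ∈ Ioi (0:ℝ), -B ≤ h t := by
    intro t ht; have := hE_ge t ht; simp only [hhdef]; linarith
  have hE_ge' : ∀ a b : ℝ, (∀ s ∈ Set.Ioi (0 : ℝ), a * s + b ≤ g s) →
      ∀ t ∈ Ioi (0:ℝ), a * t + b ≤ convexEnvelope g t :=
    fun a b hab t ht => le_csSup (hbddA t ht) ⟨a, b, hab, rfl⟩
  -- convexity of h
  have hconv : ConvexOn ℝ (Ioi (0:ℝ)) h := by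
    refine ⟨convex_Ioi 0, fun x hx y hy p q hp hq hpq => ?_⟩
    simp only [smul_eq_mul, hhdef]
    have key : convexEnvelope g (p * x + q * y)
        ≤ p * convexEnvelope g x + q * convexEnvelope g y := by
      refine csSup_le (hne _) ?_
      rintro z ⟨a, b, hab, rfl⟩
      have h1 : a * x + b ≤ convexEnvelope g x := hE_ge' a b hab x hx
      have h2 : a * y + b ≤ convexEnvelope g y := hE_ge' a b hab y hy
      have e : a * (p * x + q * y) + b = p * (a * x + b) + q * (a * y + b) := by
        linear_combination (-b) * hpq
      rw [e]
      exact add_le_add (mul_le_mul_of_nonneg_left h1 hp) (mul_le_mul_of_nonneg_left h2 hq)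
    have e2 : μ * (p * x + q * y) = p * (μ * x) + q * (μ * y) := by ring
    have e3 : p * (convexEnvelope g x - μ * x) + q * (convexEnvelope g y - μ * y)
        = p * convexEnvelope g x + q * convexEnvelope g y - (p * (μ * x) + q * (μ * y)) := by ring
    rw [e3]
    linarith [key, e2.le, e2.ge]
  -- antitone
  have hanti : AntitoneOn h (Ioi (0:ℝ)) := by
    rintro t1 ht1 t2 ht2 hle
    rcases eq_or_lt_of_le hle with rfl | hlt
    · exact le_refl _
    by_contra hcon
    push_neg at hcon
    set d : ℝ := h t2 - h t1 with hd
    have hdpos : 0 < d := by simp only [hd]; linarith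
    set t : ℝ := t1 + (B + 1 - h t1) * (t2 - t1) / d with ht
    have hBht2 : h t2 ≤ B := hh_le t2 ht2
    have h1 : d < B + 1 - h t1 := by simp only [hd]; linarith
    have ht21 : 0 < t2 - t1 := by linarith
    have htgt : t2 < t := by
      have : t2 - t1 < (B + 1 - h t1) * (t2 - t1) / d := by
        rw [lt_div_iff₀ hdpos]; nlinarith
      simp only [ht]; linarith
    have ht0 : t ∈ Ioi (0:ℝ) := lt_trans (lt_trans ht1 hlt) htgt
    have htt1 : 0 < t - t1 := by linarith [mem_Ioi.1 ht1]
    set p : ℝ := (t - t2) / (t - t1) with hp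
    set q : ℝ := (t2 - t1) / (t - t1) with hq
    have hp0 : 0 ≤ p := div_nonneg (by linarith) htt1.le
    have hq0 : 0 < q := div_pos ht21 htt1
    have hpq : p + q = 1 := by rw [hp, hq]; field_simp; ring
    have hcomb : p * t1 + q * t = t2 := by
      rw [hp, hq]; field_simp; ring
    have hcx := hconv.2 ht1 ht0 hp0 hq0.le hpq
    simp only [smul_eq_mul, hcomb] at hcx
    have e : p * h t1 + q * h t1 = h t1 := by linear_combination (h t1) * hpq
    have hqd : d ≤ q * (h t - h t1) := by nlinarith [hcx, e]
    have hhtB : h t ≤ B := hh_le t ht0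
    have h5 : q * (h t - h t1) ≤ q * (B - h t1) :=
      mul_le_mul_of_nonneg_left (by linarith) hq0.le
    have h6 : d ≤ (t2 - t1) * (B - h t1) / (t - t1) := by
      calc d ≤ q * (B - h t1) := le_trans hqd h5
      _ = (t2 - t1) * (B - h t1) / (t - t1) := by rw [hq]; ring
    rw [le_div_iff₀ htt1] at h6
    have h7 : d * (t - t1) = (B + 1 - h t1) * (t2 - t1) := by
      simp only [ht]
      field_simp
      ring
    nlinarith [h6, h7]
  -- image bounds
  set I : Set ℝ := h '' Ioi 0 with hI
  have hIne : I.Nonempty := ⟨h 1, ⟨1, by norm_num, rfl⟩⟩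
  have hIbb : BddBelow I := ⟨-B, by rintro _ ⟨t, ht, rfl⟩; exact hh_ge t ht⟩
  have hIba : BddAbove I := ⟨B, by rintro _ ⟨t, ht, rfl⟩; exact hh_le t ht⟩
  set L : ℝ := sInf I with hL
  set c : ℝ := sSup I with hc
  have hLle : ∀ t ∈ Ioi (0:ℝ), L ≤ h t := fun t ht => csInf_le hIbb ⟨t, ht, rfl⟩
  have hcge : ∀ t ∈ Ioi (0:ℝ), h t ≤ c := fun t ht => le_csSup hIba ⟨t, ht, rfl⟩
  have htendL : Tendsto h atTop (nhds L) := by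
    rw [tendsto_order]
    constructor
    · intro a ha
      filter_upwards [eventually_gt_atTop (0:ℝ)] with t ht
      exact lt_of_lt_of_le ha (hLle t ht)
    · intro a ha
      obtain ⟨y, ⟨t0, ht0, rfl⟩, hy⟩ := exists_lt_of_csInf_lt hIne ha
      filter_upwards [eventually_ge_atTop (max t0 1)] with t ht
      have ht' : (0:ℝ) < t := lt_of_lt_of_le one_pos (le_trans (le_max_right _ _) ht)
      exact lt_of_le_of_lt (hanti ht0 ht' (le_trans (le_max_left _ _) ht)) hy
  have htend0 : Tendsto h (nhdsWithin 0 (Ioi 0)) (nhds c) := by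
    rw [tendsto_order]
    constructor
    · intro a ha
      obtain ⟨y, ⟨t0, ht0, rfl⟩, hy⟩ := exists_lt_of_lt_csSup hIne ha
      have hmemIoo : Ioo (0:ℝ) t0 ∈ nhdsWithin 0 (Ioi 0) :=
        Ioo_mem_nhdsGT_of_mem ⟨le_refl 0, ht0⟩
      filter_upwards [hmemIoo] with s hs
      exact lt_of_lt_of_le hy (hanti hs.1 ht0 hs.2.le)
    · intro a ha
      filter_upwards [self_mem_nhdsWithin] with s hs
      exact lt_of_le_of_lt (hcge s hs) ha
  have hcle : c ≤ c0 := by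
    have hev : ∀ᶠ s in nhdsWithin (0:ℝ) (Ioi 0), h s ≤ φ s := by
      filter_upwards [self_mem_nhdsWithin] with s hs
      have := hE_le s hs
      simp only [hhdef, hφdef]; linarith
    exact le_of_tendsto_of_tendsto htend0 h0 hev
  have hc0le : c0 ≤ c := by
    have key : ∀ ε : ℝ, 0 < ε → c0 - ε ≤ c := by
      intro ε hε
      obtain ⟨δ, hδpos, hδ⟩ := Metric.tendsto_nhdsWithin_nhds.1 h0 ε hε
      set A : ℝ := (-B - (c0 - ε)) / (δ / 2) with hA
      set a : ℝ := min 0 A with ha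
      have ha0 : a ≤ 0 := min_le_left _ _
      have haδ : a * (δ / 2) ≤ -B - (c0 - ε) := by
        rcases le_total A 0 with hA0 | hA0
        · have e : a = A := min_eq_right hA0
          rw [e, hA]; field_simp; exact le_rfl
        · have e : a = 0 := min_eq_left hA0
          have e2 : A * (δ / 2) = -B - (c0 - ε) := by rw [hA]; field_simp
          have := mul_nonneg hA0 (by linarith : (0:ℝ) ≤ δ / 2)
          rw [e]; linarith
      have hmin : ∀ s ∈ Set.Ioi (0:ℝ), (a + μ) * s + (c0 - ε) ≤ g s := by
        intro s hs
        have hs' : (0:ℝ) < s := hs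
        have e : (a + μ) * s = a * s + μ * s := by ring
        have goal : a * s + (c0 - ε) ≤ φ s → (a + μ) * s + (c0 - ε) ≤ g s := by
          intro hh; simp only [hφdef] at hh; linarith [e.le, e.ge]
        apply goal
        rcases lt_or_ge s (δ / 2) with hcase | hcase
        · have hdist : dist s 0 < δ := by
            rw [Real.dist_eq, sub_zero, abs_of_pos hs']; linarith
          have h1 := hδ hs hdist
          rw [Real.dist_eq] at h1
          have h2 : c0 - ε < φ s := by
            rcases abs_lt.1 h1 with ⟨hl, _⟩; linarith
          have h3 : a * s ≤ 0 := mul_nonpos_of_nonpos_of_nonneg ha0 hs'.le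
          linarith
        · have h1 : a * s ≤ a * (δ / 2) := by nlinarith
          have h2 := hBl s hs
          linarith
      have hlow : ∀ᶠ t in nhdsWithin (0:ℝ) (Ioi 0), a * t + (c0 - ε) ≤ h t := by
        filter_upwards [self_mem_nhdsWithin] with t ht
        have := hE_ge' (a + μ) (c0 - ε) hmin t ht
        have e : (a + μ) * t = a * t + μ * t := by ring
        simp only [hhdef]; linarith [e.le, e.ge]
      have htendaff : Tendsto (fun t : ℝ => a * t + (c0 - ε))
          (nhdsWithin 0 (Ioi 0)) (nhds (c0 - ε)) := by
        have hc : Continuous (fun t : ℝ => a * t + (c0 - ε)) :=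
          (continuous_const.mul continuous_id).add continuous_const
        have := (hc.tendsto 0).mono_left (nhdsWithin_le_nhds (s := Ioi (0:ℝ)))
        simpa using this
      exact le_of_tendsto_of_tendsto htendaff htend0 hlow
    by_contra hcon
    push_neg at hcon
    have := key ((c0 - c) / 2) (by linarith)
    linarith
  have hceq : c = c0 := le_antisymm hcle hc0le
  have hcontOn : ContinuousOn h (Ioi (0:ℝ)) := hconv.continuousOn isOpen_Ioi
  refine ⟨?_, ⟨L, htendL⟩, hceq ▸ htend0⟩
  have : ContinuousOn (fun t => h t + μ * t) (Ioi (0:ℝ)) :=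
    hcontOn.add ((continuous_const.mul continuous_id).continuousOn)
  exact this.congr (fun t ht => by simp only [hhdef]; ring)
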